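/- On the set of pairs (n, c), where n ∈ ℕ and c is a K_n-conjugacy class of G_n, the operation (n, class of g) • (k, class of h) := (n + k, K_{n+k}-conjugacy class of g · θ h θ⁻¹) — where g ∈ G_n and h ∈ G_k are representatives and θ ∈ K_{n+k} is any element whose underlying permutation of ℕ sends i to n + i for all 0 ≤ i < k — is well defined (it is independent of the choice of representatives g and h and of the choice of θ) and associative. -/

import Mathlib

noncomputable section

/-- Embedding of permutations of `ℕ` into permutations of `V = X ⊕ (I × ℕ)`,
acting trivially on `X` and on the first factor of `I × ℕ`.  It restricts to an
embedding of `S_∞` into `S(V)`. -/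
def embNat (I X : Type*) (τ : Equiv.Perm ℕ) : Equiv.Perm (X ⊕ I × ℕ) :=
  Equiv.sumCongr (Equiv.refl X) (Equiv.prodCongr (Equiv.refl I) τ)

/-- `τ` fixes every `m ≥ n`, i.e. `τ` belongs to the subgroup `S_n ≤ S_∞`. -/
def fixesFrom (n : ℕ) (τ : Equiv.Perm ℕ) : Prop := ∀ m : ℕ, n ≤ m → τ m = m

/-- `G_n`: the set of elements of `G_∞` fixing every point of `V ∖ V_n`. -/
def Gset {I X : Type*} (Ginf : Subgroup (Equiv.Perm (X ⊕ I × ℕ))) (n : ℕ) :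
    Set (Equiv.Perm (X ⊕ I × ℕ)) :=
  {g | g ∈ Ginf ∧ ∀ (i : I) (m : ℕ), n ≤ m → g (Sum.inr (i, m)) = Sum.inr (i, m)}

/-- `K_n`-conjugacy of elements of `S(V)`:  `g' = κ g κ⁻¹` for some `κ ∈ K_n`,
where `K_n` is the image of `S_n` in `S(V)`. -/
def Kconj {I X : Type*} (n : ℕ) (g g' : Equiv.Perm (X ⊕ I × ℕ)) : Prop :=
  ∃ τ : Equiv.Perm ℕ, fixesFrom n τ ∧ g' = embNat I X τ * g * (embNat I X τ)⁻¹

/-- A permutation of `Fin N` extended to `ℕ` and then to `V`; these elements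
form exactly the subgroup `K_N ≤ S(V)`. -/
def embFin (I X : Type*) (N : ℕ) (σ : Equiv.Perm (Fin N)) : Equiv.Perm (X ⊕ I × ℕ) :=
  embNat I X (σ.extendDomain Fin.equivSubtype)

/-- The element `A_N[j,g] = (1/(N−j)!) Σ_{τ ∈ K_N} τ g τ⁻¹` of `ℂ[G_∞]`
(and `A_N[j,g] = 0` for `j > N`). -/
def AN (I X : Type*) (N j : ℕ) (g : Equiv.Perm (X ⊕ I × ℕ)) :
    MonoidAlgebra ℂ (Equiv.Perm (X ⊕ I × ℕ)) :=
  if j ≤ N then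
    ((Nat.factorial (N - j) : ℂ))⁻¹ •
      ∑ σ : Equiv.Perm (Fin N),
        MonoidAlgebra.of ℂ (Equiv.Perm (X ⊕ I × ℕ))
          (embFin I X N σ * g * (embFin I X N σ)⁻¹)
  else 0


/-- `K_j`-conjugacy, as a relation on the subtype `G_j`. -/
def conjRel {I X : Type*} (Ginf : Subgroup (Equiv.Perm (X ⊕ I × ℕ))) (j : ℕ)
    (a b : {g : Equiv.Perm (X ⊕ I × ℕ) // g ∈ Gset Ginf j}) : Prop :=
  Kconj j (a : Equiv.Perm (X ⊕ I × ℕ)) (b : Equiv.Perm (X ⊕ I × ℕ))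

/-- The set of pairs `(m, K_m-conjugacy class of G_m)`. -/
def Cls {I X : Type*} (Ginf : Subgroup (Equiv.Perm (X ⊕ I × ℕ))) : Type _ :=
  Σ j : ℕ, Quot (conjRel Ginf j)

/-! ### Auxiliary material -/

section Aux

variable {I X : Type*}

@[simp] lemma embNat_inl (τ : Equiv.Perm ℕ) (x : X) :
    embNat I X τ (Sum.inl x) = Sum.inl x := rfl

@[simp] lemma embNat_inr (τ : Equiv.Perm ℕ) (i : I) (m : ℕ) :
    embNat I X τ (Sum.inr (i, m)) = Sum.inr (i, τ m) := rfl

lemma embNat_mul (σ τ : Equiv.Perm ℕ) :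
    embNat I X (σ * τ) = embNat I X σ * embNat I X τ := by
  ext v; rcases v with x | ⟨i, m⟩ <;> rfl

lemma embNat_inv (τ : Equiv.Perm ℕ) : embNat I X τ⁻¹ = (embNat I X τ)⁻¹ := by
  rw [eq_inv_iff_mul_eq_one, ← embNat_mul]
  ext v; rcases v with x | ⟨i, m⟩ <;> simp

/-- Key commutation lemma: if `h` fixes every point `(i,m)` with `m` moved by `τ`,
then `embNat τ` commutes with `h`. -/
lemma embNat_comm (τ : Equiv.Perm ℕ) (h : Equiv.Perm (X ⊕ I × ℕ))
    (H : ∀ (i : I) (m : ℕ), τ m ≠ m → h (Sum.inr (i, m)) = Sum.inr (i, m)) :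
    embNat I X τ * h = h * embNat I X τ := by
  ext v
  show embNat I X τ (h v) = h (embNat I X τ v)
  rcases v with x | ⟨i, m⟩
  · rw [embNat_inl]
    rcases hv : h (Sum.inl x) with x' | ⟨j, l⟩
    · rfl
    · rw [embNat_inr]
      by_cases hl : τ l = l
      · rw [hl]
      · have := H j l hl
        have : (Sum.inl x : X ⊕ I × ℕ) = Sum.inr (j, l) := h.injective (hv.trans this.symm)
        simp at this
  · by_cases hm : τ m = m
    · rw [embNat_inr, hm]
      rcases hv : h (Sum.inr (i, m)) with x' | ⟨j, l⟩
      · rfl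
      · rw [embNat_inr]
        by_cases hl : τ l = l
        · rw [hl]
        · have h1 := H j l hl
          have h2 : (Sum.inr (i, m) : X ⊕ I × ℕ) = Sum.inr (j, l) :=
            h.injective (hv.trans h1.symm)
          simp only [Sum.inr.injEq, Prod.mk.injEq] at h2
          exact absurd (h2.2 ▸ hm) hl
    · have h1 : h (Sum.inr (i, m)) = Sum.inr (i, m) := H i m hm
      have hm2 : τ (τ m) ≠ τ m := fun hc => hm (τ.injective hc)
      rw [h1, embNat_inr, H i (τ m) hm2]

/-- Independence of the conjugator: if `θ` and `θ'` agree below `k` and `h` fixes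
all levels `≥ k`, then conjugating `h` by `embNat θ` or `embNat θ'` is the same. -/
lemma conj_indep {k : ℕ} {h : Equiv.Perm (X ⊕ I × ℕ)}
    (hh : ∀ (i : I) (m : ℕ), k ≤ m → h (Sum.inr (i, m)) = Sum.inr (i, m))
    {θ θ' : Equiv.Perm ℕ} (hag : ∀ m, m < k → θ m = θ' m) :
    embNat I X θ * h * (embNat I X θ)⁻¹ = embNat I X θ' * h * (embNat I X θ')⁻¹ := by
  set τ : Equiv.Perm ℕ := θ'⁻¹ * θ with hτ
  have hc : embNat I X τ * h = h * embNat I X τ := by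
    apply embNat_comm
    intro i m hm
    apply hh
    by_contra hk
    push_neg at hk
    exact hm (by simp [hτ, Equiv.Perm.mul_apply, hag m hk])
  have key : embNat I X τ * h * (embNat I X τ)⁻¹ = h := by
    rw [hc, mul_inv_cancel_right]
  have hθ : θ = θ' * τ := by rw [hτ]; group
  rw [hθ, embNat_mul]
  calc embNat I X θ' * embNat I X τ * h * (embNat I X θ' * embNat I X τ)⁻¹
      = embNat I X θ' * (embNat I X τ * h * (embNat I X τ)⁻¹) * (embNat I X θ')⁻¹ := by
        group
    _ = embNat I X θ' * h * (embNat I X θ')⁻¹ := by rw [key]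

lemma fixesFrom_inv {n : ℕ} {τ : Equiv.Perm ℕ} (h : fixesFrom n τ) :
    fixesFrom n τ⁻¹ := by
  intro m hm
  calc τ⁻¹ m = τ⁻¹ (τ m) := by rw [h m hm]
    _ = m := τ.symm_apply_apply m

lemma fixesFrom_mono {n n' : ℕ} (hle : n ≤ n') {τ : Equiv.Perm ℕ}
    (h : fixesFrom n τ) : fixesFrom n' τ := fun m hm => h m (hle.trans hm)

lemma fixesFrom_finite {n : ℕ} {τ : Equiv.Perm ℕ} (h : fixesFrom n τ) :
    {m : ℕ | τ m ≠ m}.Finite := by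
  apply (Set.finite_Iio n).subset
  intro m hm
  by_contra hc
  exact hm (h m (le_of_not_gt hc))

/-- The standard shift permutation: `i ↦ n+i` for `i < k`, `i ↦ i−k` for
`k ≤ i < n+k`, identity above. -/
def thetaP (n k : ℕ) : Equiv.Perm ℕ where
  toFun i := if i < k then n + i else if i < n + k then i - k else i
  invFun i := if i < n then i + k else if i < n + k then i - n else i
  left_inv := by intro i; dsimp only; split_ifs <;> omega
  right_inv := by intro i; dsimp only; split_ifs <;> omega

lemma thetaP_lt {n k : ℕ} {m : ℕ} (h : m < k) : thetaP n k m = n + m := by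
  simp [thetaP, h]

lemma thetaP_fixesFrom (n k : ℕ) : fixesFrom (n + k) (thetaP n k) := by
  intro m hm
  simp only [thetaP, Equiv.coe_fn_mk]
  split_ifs <;> omega

/-- Values of `θ⁻¹` on levels that are not in `[n, n+k)` are `≥ k`, provided
`θ` sends `[0,k)` into `[n, n+k)` via `i ↦ n+i`. -/
lemma theta_inv_ge {θ : Equiv.Perm ℕ} {n k : ℕ} (hθ : ∀ i : ℕ, i < k → θ i = n + i)
    {m : ℕ} (hm : ¬ n ≤ m) : k ≤ θ⁻¹ m := by
  by_contra hc
  push_neg at hc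
  have : θ (θ⁻¹ m) = n + θ⁻¹ m := hθ _ hc
  rw [(show ∀ x, θ (θ⁻¹ x) = x from fun x => (Equiv.eq_symm_apply θ).mp rfl)] at this
  omega

/-- Conjugation of an element of `G_k` by an admissible `θ` fixes all levels
outside `[n, n+k)`. -/
lemma conj_fixes {Ginf : Subgroup (Equiv.Perm (X ⊕ I × ℕ))} {k : ℕ}
    {h : Equiv.Perm (X ⊕ I × ℕ)} (hh : h ∈ Gset Ginf k)
    {θ : Equiv.Perm ℕ} {n : ℕ} (hθ : ∀ i : ℕ, i < k → θ i = n + i)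
    (i : I) (m : ℕ) (hm : ¬ n ≤ m) :
    (embNat I X θ * h * (embNat I X θ)⁻¹) (Sum.inr (i, m)) = Sum.inr (i, m) := by
  have h1 : k ≤ θ⁻¹ m := theta_inv_ge hθ hm
  show embNat I X θ (h ((embNat I X θ)⁻¹ (Sum.inr (i, m)))) = Sum.inr (i, m)
  rw [← embNat_inv, embNat_inr, hh.2 i _ h1, embNat_inr, (show ∀ x, θ (θ⁻¹ x) = x from fun x => (Equiv.eq_symm_apply θ).mp rfl)]

/-- Membership: the product representative lies in `G_{n+k}`. -/
lemma prodRep_mem {Ginf : Subgroup (Equiv.Perm (X ⊕ I × ℕ))}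
    (hGS : ∀ τ : Equiv.Perm ℕ, {m : ℕ | τ m ≠ m}.Finite → embNat I X τ ∈ Ginf)
    {n k : ℕ} {g h : Equiv.Perm (X ⊕ I × ℕ)}
    (hg : g ∈ Gset Ginf n) (hh : h ∈ Gset Ginf k)
    {θ : Equiv.Perm ℕ} (hθf : fixesFrom (n + k) θ) :
    g * (embNat I X θ * h * (embNat I X θ)⁻¹) ∈ Gset Ginf (n + k) := by
  have hθG : embNat I X θ ∈ Ginf := hGS θ (fixesFrom_finite hθf)
  constructor
  · exact Ginf.mul_mem hg.1
      (Ginf.mul_mem (Ginf.mul_mem hθG hh.1) (Ginf.inv_mem hθG))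
  · intro i m hm
    have h2 : θ⁻¹ m = m := fixesFrom_inv hθf m hm
    show g (embNat I X θ (h ((embNat I X θ)⁻¹ (Sum.inr (i, m))))) = Sum.inr (i, m)
    rw [← embNat_inv, embNat_inr, h2, hh.2 i m (by omega), embNat_inr, hθf m hm,
      hg.2 i m (by omega)]

/-- The canonical representative of the product. -/
def repMul (n k : ℕ) (g h : Equiv.Perm (X ⊕ I × ℕ)) : Equiv.Perm (X ⊕ I × ℕ) :=
  g * (embNat I X (thetaP n k) * h * (embNat I X (thetaP n k))⁻¹)

lemma thetaP_lt' (n k : ℕ) : ∀ i : ℕ, i < k → thetaP n k i = n + i :=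
  fun _ h => thetaP_lt h

lemma repMul_mem {Ginf : Subgroup (Equiv.Perm (X ⊕ I × ℕ))}
    (hGS : ∀ τ : Equiv.Perm ℕ, {m : ℕ | τ m ≠ m}.Finite → embNat I X τ ∈ Ginf)
    {n k : ℕ} {g h : Equiv.Perm (X ⊕ I × ℕ)}
    (hg : g ∈ Gset Ginf n) (hh : h ∈ Gset Ginf k) :
    repMul n k g h ∈ Gset Ginf (n + k) :=
  prodRep_mem hGS hg hh (thetaP_fixesFrom n k)

/-- Well-definedness in the second argument. -/
lemma repMul_wd_right {Ginf : Subgroup (Equiv.Perm (X ⊕ I × ℕ))}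
    {n k : ℕ} {g h h' : Equiv.Perm (X ⊕ I × ℕ)}
    (hg : g ∈ Gset Ginf n)
    (hK : Kconj k h h') :
    Kconj (n + k) (repMul n k g h) (repMul n k g h') := by
  obtain ⟨lam, hlamf, rfl⟩ := hK
  set θ := thetaP n k with hθdef
  refine ⟨θ * lam * θ⁻¹, ?_, ?_⟩
  · intro m hm
    have h1 : θ⁻¹ m = m := fixesFrom_inv (thetaP_fixesFrom n k) m hm
    simp only [Equiv.Perm.mul_apply, h1, hlamf m (by omega), show θ m = m from thetaP_fixesFrom n k m hm]
  · have hsup : ∀ m : ℕ, (θ * lam * θ⁻¹ : Equiv.Perm ℕ) m ≠ m → n ≤ m := by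
      intro m hm
      by_contra hn
      have h1 : k ≤ θ⁻¹ m := theta_inv_ge (thetaP_lt' n k) hn
      apply hm
      simp only [Equiv.Perm.mul_apply, hlamf _ h1, (show ∀ x, θ (θ⁻¹ x) = x from fun x => (Equiv.eq_symm_apply θ).mp rfl)]
    have hcomm : embNat I X (θ * lam * θ⁻¹) * g = g * embNat I X (θ * lam * θ⁻¹) :=
      embNat_comm _ _ (fun i m hm => hg.2 i m (hsup m hm))
    rw [embNat_mul, embNat_mul, embNat_inv] at hcomm ⊢
    set A := embNat I X θ
    set L := embNat I X lam
    set M := A * L * A⁻¹ with hM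
    have hMg : M * g * M⁻¹ = g := by rw [hcomm, mul_inv_cancel_right]
    show repMul n k g (L * h * L⁻¹) = M * repMul n k g h * M⁻¹
    unfold repMul
    rw [← hθdef]
    calc g * (A * (L * h * L⁻¹) * A⁻¹)
        = (M * g * M⁻¹) * (M * (A * h * A⁻¹) * M⁻¹) := by rw [hMg, hM]; group
      _ = M * (g * (A * h * A⁻¹)) * M⁻¹ := by group

/-- Well-definedness in the first argument. -/
lemma repMul_wd_left {Ginf : Subgroup (Equiv.Perm (X ⊕ I × ℕ))}
    {n k : ℕ} {g g' h : Equiv.Perm (X ⊕ I × ℕ)}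
    (hh : h ∈ Gset Ginf k)
    (hK : Kconj n g g') :
    Kconj (n + k) (repMul n k g h) (repMul n k g' h) := by
  obtain ⟨kap, hkapf, rfl⟩ := hK
  refine ⟨kap, fixesFrom_mono (by omega) hkapf, ?_⟩
  have hcomm : embNat I X kap *
      (embNat I X (thetaP n k) * h * (embNat I X (thetaP n k))⁻¹)
      = (embNat I X (thetaP n k) * h * (embNat I X (thetaP n k))⁻¹) * embNat I X kap := by
    apply embNat_comm
    intro i m hm
    have hmn : ¬ n ≤ m := fun hn => hm (hkapf m hn)
    exact conj_fixes hh (thetaP_lt' n k) i m hmn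
  set K := embNat I X kap
  set H := embNat I X (thetaP n k) * h * (embNat I X (thetaP n k))⁻¹ with hH
  have hcomm' : K⁻¹ * H = H * K⁻¹ := by
    calc K⁻¹ * H = K⁻¹ * (H * K) * K⁻¹ := by group
      _ = K⁻¹ * (K * H) * K⁻¹ := by rw [hcomm]
      _ = H * K⁻¹ := by group
  show (K * g * K⁻¹) * H = K * (g * H) * K⁻¹
  calc (K * g * K⁻¹) * H = K * g * (K⁻¹ * H) := by group
    _ = K * g * (H * K⁻¹) := by rw [hcomm']
    _ = K * (g * H) * K⁻¹ := by group

/-- `Cls` elements built from equal data are equal. -/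
lemma cls_eq {Ginf : Subgroup (Equiv.Perm (X ⊕ I × ℕ))}
    {j j' : ℕ} (e : j = j') {g g' : Equiv.Perm (X ⊕ I × ℕ)} (hgg : g = g')
    (hg : g ∈ Gset Ginf j) (hg' : g' ∈ Gset Ginf j') :
    (⟨j, Quot.mk _ ⟨g, hg⟩⟩ : Cls Ginf) = ⟨j', Quot.mk _ ⟨g', hg'⟩⟩ := by
  subst e; subst hgg; rfl

/-- The product operation on classes. -/
def opC (Ginf : Subgroup (Equiv.Perm (X ⊕ I × ℕ)))
    (hGS : ∀ τ : Equiv.Perm ℕ, {m : ℕ | τ m ≠ m}.Finite → embNat I X τ ∈ Ginf) :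
    Cls Ginf → Cls Ginf → Cls Ginf := fun x y =>
  ⟨x.1 + y.1, Quot.lift₂
    (fun (a : {g : Equiv.Perm (X ⊕ I × ℕ) // g ∈ Gset Ginf x.1})
         (b : {g : Equiv.Perm (X ⊕ I × ℕ) // g ∈ Gset Ginf y.1}) =>
      Quot.mk (conjRel Ginf (x.1 + y.1))
        ⟨repMul x.1 y.1 a.1 b.1, repMul_mem hGS a.2 b.2⟩)
    (fun a b₁ b₂ hb => Quot.sound
      (show Kconj (x.1 + y.1) (repMul x.1 y.1 a.1 b₁.1) (repMul x.1 y.1 a.1 b₂.1) from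
        repMul_wd_right a.2 hb))
    (fun a₁ a₂ b ha => Quot.sound
      (show Kconj (x.1 + y.1) (repMul x.1 y.1 a₁.1 b.1) (repMul x.1 y.1 a₂.1 b.1) from
        repMul_wd_left b.2 ha))
    x.2 y.2⟩

end Aux

/-- On the set of pairs `(n, K_n-conjugacy class of G_n)`, the operation
`(n, class of g) • (k, class of h) := (n+k, class of g · θ h θ⁻¹)` — where `θ ∈ K_{n+k}`
is any element whose underlying permutation of `ℕ` sends `i` to `n + i` for `0 ≤ i < k` —
is well defined (independent of the representatives `g`, `h` and of `θ`, and its result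
is indeed a class of `G_{n+k}`) and associative:  there is an operation `op` on classes
which on every pair of representatives and for every admissible `θ` is computed by the
above formula, and `op` is associative. -/
theorem bullet_product_welldefined_and_associative
    {I X : Type*} [Finite I] [Countable X]
    (Ginf : Subgroup (Equiv.Perm (X ⊕ I × ℕ)))
    (hGfs : ∀ g ∈ Ginf, {v : X ⊕ I × ℕ | g v ≠ v}.Finite)
    (hGS : ∀ τ : Equiv.Perm ℕ, {m : ℕ | τ m ≠ m}.Finite → embNat I X τ ∈ Ginf) :
    ∃ op : Cls Ginf → Cls Ginf → Cls Ginf,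
      (∀ (n k : ℕ) (g h : Equiv.Perm (X ⊕ I × ℕ))
          (hg : g ∈ Gset Ginf n) (hh : h ∈ Gset Ginf k)
          (θ : Equiv.Perm ℕ), fixesFrom (n + k) θ → (∀ i : ℕ, i < k → θ i = n + i) →
        ∃ hmem : g * (embNat I X θ * h * (embNat I X θ)⁻¹) ∈ Gset Ginf (n + k),
          op ⟨n, Quot.mk _ ⟨g, hg⟩⟩ ⟨k, Quot.mk _ ⟨h, hh⟩⟩
            = ⟨n + k, Quot.mk _ ⟨g * (embNat I X θ * h * (embNat I X θ)⁻¹), hmem⟩⟩) ∧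
      (∀ x y z : Cls Ginf, op (op x y) z = op x (op y z)) := by
  refine ⟨opC Ginf hGS, ?_, ?_⟩
  · intro n k g h hg hh θ hθf hθ
    refine ⟨prodRep_mem hGS hg hh hθf, ?_⟩
    exact cls_eq rfl
      (by
        unfold repMul
        rw [conj_indep (fun i m hm => hh.2 i m hm)
          (fun m hm => ((thetaP_lt hm).trans (hθ m hm).symm : thetaP n k m = θ m))]) _ _
  · rintro ⟨n, qx⟩ ⟨k, qy⟩ ⟨l, qz⟩
    induction qx using Quot.ind with | _ a =>
    induction qy using Quot.ind with | _ b =>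
    induction qz using Quot.ind with | _ c =>
    obtain ⟨g, hg⟩ := a
    obtain ⟨h, hh⟩ := b
    obtain ⟨f, hf⟩ := c
    have key : repMul (n + k) l (repMul n k g h) f = repMul n (k + l) g (repMul k l h f) := ?_
    · exact cls_eq (add_assoc n k l) key _ _
    have c1 : embNat I X (thetaP n k) * h * (embNat I X (thetaP n k))⁻¹
        = embNat I X (thetaP n (k + l)) * h * (embNat I X (thetaP n (k + l)))⁻¹ :=
      conj_indep (fun i m hm => hh.2 i m hm)
        (fun m hm => by rw [thetaP_lt hm, thetaP_lt (by omega : m < k + l)])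
    have c2 : embNat I X (thetaP (n + k) l) * f * (embNat I X (thetaP (n + k) l))⁻¹
        = embNat I X (thetaP n (k + l) * thetaP k l) * f *
            (embNat I X (thetaP n (k + l) * thetaP k l))⁻¹ :=
      conj_indep (fun i m hm => hf.2 i m hm)
        (fun m hm => by
          have h1 : thetaP k l m = k + m := thetaP_lt hm
          have h2 : thetaP n (k + l) (k + m) = n + (k + m) :=
            thetaP_lt (by omega : k + m < k + l)
          simp only [Equiv.Perm.mul_apply, h1, h2, thetaP_lt (show m < l from hm)]
          omega)
    unfold repMul
    rw [c1, c2, embNat_mul]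
    group
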